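/- Let k be a field of characteristic two, v ∈ k^{2n}, and A an alternating 2n×2n matrix over k. Then the characteristic polynomial of the matrix (v vᵀ + A)·J equals the characteristic polynomial of A·J. In particular, (v vᵀ + A)·J is nilpotent if and only if A·J is nilpotent. -/

import Mathlib

open Matrix

/-- The standard symplectic form matrix `J = [[0, −1ₙ], [1ₙ, 0]]`. -/
def Jmat (n : ℕ) (R : Type*) [CommRing R] :
    Matrix (Fin n ⊕ Fin n) (Fin n ⊕ Fin n) R :=
  Matrix.fromBlocks 0 (-1) 1 0

open Polynomial Finset

section Aux

variable {ι : Type*} [Fintype ι] [DecidableEq ι] {R : Type*} [CommRing R]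

lemma even_card_not_fixed (σ : Equiv.Perm ι) (hσ : ∀ i, σ (σ i) = i) :
    Even (Finset.univ.filter fun i => σ i ≠ i).card := by
  have h0 : ∑ _x ∈ (Finset.univ.filter fun i : ι => σ i ≠ i), (1 : ZMod 2) = 0 := by
    apply Finset.sum_involution (g := fun a _ => σ a)
    · intro a _; decide
    · intro a ha _
      simpa using (Finset.mem_filter.mp ha).2
    · intro a ha
      simp only [Finset.mem_filter, Finset.mem_univ, true_and] at ha ⊢
      rw [hσ]
      exact fun h => ha h.symm
    · intro a _; exact hσ a
  rw [Finset.sum_const, nsmul_eq_mul, mul_one] at h0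
  obtain ⟨c, hc⟩ := (ZMod.natCast_eq_zero_iff _ 2).mp h0
  exact ⟨c, by omega⟩

lemma exists_other_fixed (hcard : Even (Fintype.card ι)) (σ : Equiv.Perm ι)
    (hσ : ∀ j, σ (σ j) = j) (i : ι) (hi : σ i = i) : ∃ j, σ j = j ∧ j ≠ i := by
  have h1 := Finset.card_filter_add_card_filter_not
    (s := (Finset.univ : Finset ι)) (p := fun j => σ j = j)
  rw [Finset.card_univ] at h1
  have h2 := even_card_not_fixed σ hσ
  have h2' : Even (Finset.univ.filter fun j : ι => ¬ σ j = j).card := h2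
  have hF : Even (Finset.univ.filter fun j : ι => σ j = j).card := by
    rcases h2' with ⟨a, ha⟩; rcases hcard with ⟨b, hb⟩
    refine ⟨b - a, by omega⟩
  have hiF : i ∈ Finset.univ.filter fun j : ι => σ j = j := by
    simp [hi]
  have hlt : 1 < (Finset.univ.filter fun j : ι => σ j = j).card := by
    have hpos : 0 < (Finset.univ.filter fun j : ι => σ j = j).card :=
      Finset.card_pos.mpr ⟨i, hiF⟩
    rcases hF with ⟨a, ha⟩; omega
  obtain ⟨j, hjmem, hji⟩ := Finset.exists_mem_ne hlt i
  exact ⟨j, (Finset.mem_filter.mp hjmem).2, hji⟩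

/-- A symmetric matrix whose every involution has a zero entry on its "graph"
has determinant zero in characteristic two. -/
lemma det_eq_zero_of_sym_invol (h2 : (2 : R) = 0) (M : Matrix ι ι R) (hsym : Mᵀ = M)
    (hinv : ∀ σ : Equiv.Perm ι, (∀ j, σ (σ j) = j) → ∃ j, M (σ j) j = 0) :
    M.det = 0 := by
  have hB : ∀ a b, M a b = M b a := fun a b => by
    conv_lhs => rw [← hsym]
    rw [Matrix.transpose_apply]
  rw [Matrix.det_apply]
  apply Finset.sum_involution (g := fun σ _ => σ⁻¹)
  · intro σ _
    have hprod : ∏ i, M (σ⁻¹ i) i = ∏ i, M (σ i) i := by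
      calc ∏ i, M (σ⁻¹ i) i = ∏ i, M (σ⁻¹ (σ i)) (σ i) := (Equiv.prod_comp σ _).symm
        _ = ∏ i, M i (σ i) := by simp
        _ = ∏ i, M (σ i) i := Finset.prod_congr rfl fun i _ => hB i (σ i)
    rw [Equiv.Perm.sign_inv, hprod]
    have hx : ∀ x : R, x + x = 0 := fun x => by
      have : x + x = 2 * x := by ring
      rw [this, h2, zero_mul]
    exact hx _
  · intro σ _ hf hcon
    apply hf
    have hσ : ∀ j, σ (σ j) = j := fun j => by
      nth_rewrite 1 [← hcon]
      exact Equiv.symm_apply_apply σ j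
    obtain ⟨j, hj⟩ := hinv σ hσ
    have hp : ∏ i, M (σ i) i = 0 := Finset.prod_eq_zero (Finset.mem_univ j) hj
    rw [hp, smul_zero]
  · intro σ _; exact inv_inv σ
  · intro σ _; exact Finset.mem_univ _

lemma adjugate_diag_zero (h2 : (2 : R) = 0) (hcard : Even (Fintype.card ι))
    (B : Matrix ι ι R) (hsym : Bᵀ = B) (hdiag : ∀ i, B i i = 0) (i : ι) :
    adjugate B i i = 0 := by
  have hB : ∀ a b, B a b = B b a := fun a b => by
    conv_lhs => rw [← hsym]
    rw [Matrix.transpose_apply]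
  rw [Matrix.adjugate_apply]
  set N := B.updateRow i (Pi.single i 1) with hN
  have hcol : (fun j => N j i) = Pi.single i 1 + (fun j => if j = i then 0 else B j i) := by
    funext j
    by_cases hj : j = i <;>
      simp [hN, Matrix.updateRow_apply, hj, Pi.single_apply]
  have hNdet : N.det = (N.updateCol i fun j => N j i).det := by
    rw [Matrix.updateCol_eq_self]
  rw [hNdet, hcol, Matrix.det_updateCol_add]
  have hzero : (N.updateCol i fun j => if j = i then 0 else B j i).det = 0 := by
    apply Matrix.det_eq_zero_of_row_eq_zero i
    intro l
    by_cases hl : l = i <;>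
      simp [Matrix.updateCol_apply, hl, hN, Matrix.updateRow_apply, Pi.single_apply]
  rw [hzero, add_zero]
  -- the symmetric matrix N' := N.updateColumn i (Pi.single i 1)
  set N' := N.updateCol i (Pi.single i 1) with hN'
  have happly : ∀ a b, N' a b =
      if b = i then (if a = i then 1 else 0) else (if a = i then 0 else B a b) := by
    intro a b
    by_cases hb : b = i <;> by_cases ha : a = i <;>
      simp [hN', hN, Matrix.updateCol_apply, Matrix.updateRow_apply, hb, ha,
        Pi.single_apply]
  apply det_eq_zero_of_sym_invol h2
  · ext a b
    rw [Matrix.transpose_apply, happly, happly]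
    by_cases ha : a = i <;> by_cases hb : b = i <;> simp [ha, hb, hB a b]
  · intro σ hσ
    by_cases hi : σ i = i
    · obtain ⟨j, hj, hji⟩ := exists_other_fixed hcard σ hσ i hi
      refine ⟨j, ?_⟩
      rw [hj, happly]
      simp [hji, hdiag j]
    · refine ⟨σ i, ?_⟩
      rw [hσ i, happly]
      simp [hi, Ne.symm hi]

lemma quad_form_zero (h2 : (2 : R) = 0) (S : Matrix ι ι R) (hsym : Sᵀ = S)
    (hdiag : ∀ i, S i i = 0) (u : ι → R) : u ⬝ᵥ (S *ᵥ u) = 0 := by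
  have hS : ∀ a b, S a b = S b a := fun a b => by
    conv_lhs => rw [← hsym]
    rw [Matrix.transpose_apply]
  have hrw : u ⬝ᵥ (S *ᵥ u) = ∑ p ∈ Finset.univ ×ˢ Finset.univ,
      u p.1 * (S p.1 p.2 * u p.2) := by
    rw [Finset.sum_product]
    simp [dotProduct, Matrix.mulVec, Finset.mul_sum]
  rw [hrw]
  apply Finset.sum_involution (g := fun p _ => (p.2, p.1))
  · intro p _
    have : u p.1 * (S p.1 p.2 * u p.2) + u p.2 * (S p.2 p.1 * u p.1)
        = 2 * (u p.1 * (S p.1 p.2 * u p.2)) := by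
      rw [hS p.2 p.1]; ring
    rw [this, h2, zero_mul]
  · intro p _ hf hcon
    apply hf
    have h21 : p.2 = p.1 := congrArg Prod.fst hcon
    rw [h21, hdiag, zero_mul, mul_zero]
  · intro p _; exact Finset.mem_univ _
  · intro p _; exact Prod.mk.eta

end Aux

section Jfacts

variable {n : ℕ} {R : Type*} [CommRing R]

lemma Jmat_eq (h2 : (2 : R) = 0) : Jmat n R = Matrix.fromBlocks 0 1 1 0 := by
  have hneg : (-1 : Matrix (Fin n) (Fin n) R) = 1 := by
    ext i j
    simp only [Matrix.neg_apply, Matrix.one_apply]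
    have hneg1 : ∀ x : R, -x = x := fun x => by
      have hx : x + x = 0 := by
        have h4 : x + x = 2 * x := by ring
        rw [h4, h2, zero_mul]
      exact neg_eq_of_add_eq_zero_right hx
    exact hneg1 _
  rw [Jmat, hneg]

lemma Jmat_mul_self (h2 : (2 : R) = 0) : Jmat n R * Jmat n R = 1 := by
  rw [Jmat_eq h2, Matrix.fromBlocks_multiply]
  simp [Matrix.fromBlocks_one]

lemma Jmat_transpose (h2 : (2 : R) = 0) : (Jmat n R)ᵀ = Jmat n R := by
  rw [Jmat_eq h2, Matrix.fromBlocks_transpose]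
  simp

lemma Jmat_diag (h2 : (2 : R) = 0) (i : Fin n ⊕ Fin n) : Jmat n R i i = 0 := by
  rw [Jmat_eq h2]
  rcases i with i | i <;> simp

end Jfacts

/-- Key determinant identity over a field of characteristic two. -/
lemma key_det {K : Type*} [Field K] [CharP K 2] {n : ℕ}
    (B : Matrix (Fin n ⊕ Fin n) (Fin n ⊕ Fin n) K)
    (hsym : Bᵀ = B) (hdiag : ∀ i, B i i = 0)
    (hdet : IsUnit (B * Jmat n K).det) (u : Fin n ⊕ Fin n → K) :
    ((Matrix.vecMulVec u u + B) * Jmat n K).det = (B * Jmat n K).det := by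
  classical
  have h2 : (2 : K) = 0 := CharTwo.two_eq_zero
  set J := Jmat n K with hJdef
  have hJ2 : J * J = 1 := Jmat_mul_self h2
  have hdetJ : J.det = 1 := by
    have h := congrArg Matrix.det hJ2
    rw [Matrix.det_mul, Matrix.det_one] at h
    rcases mul_self_eq_one_iff.mp h with h1 | h1
    · exact h1
    · rw [h1, CharTwo.neg_eq]
  have hadjJ : adjugate J = J := by
    have h1 : adjugate J * J = 1 := by rw [Matrix.adjugate_mul, hdetJ, one_smul]
    calc adjugate J = adjugate J * (J * J) := by rw [hJ2, mul_one]
      _ = (adjugate J * J) * J := by rw [mul_assoc]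
      _ = J := by rw [h1, one_mul]
  have hexp : (Matrix.vecMulVec u u + B) * J
      = B * J + Matrix.replicateCol Unit u * Matrix.replicateRow Unit (u ᵥ* J) := by
    rw [add_mul, Matrix.vecMulVec_eq Unit, Matrix.mul_assoc, ← Matrix.replicateRow_vecMul, add_comm]
  rw [hexp, Matrix.det_add_replicateCol_mul_replicateRow hdet]
  suffices h : (1 + Matrix.replicateRow Unit (u ᵥ* J) * (B * J)⁻¹ * Matrix.replicateCol Unit u).det = 1 by
    rw [h, mul_one]
  have hdot : (u ᵥ* J) ⬝ᵥ ((B * J)⁻¹ *ᵥ u) = 0 := by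
    rw [Matrix.inv_def, Matrix.smul_mulVec, dotProduct_smul]
    have hadj : adjugate (B * J) = J * adjugate B := by
      rw [Matrix.adjugate_mul_distrib, hadjJ]
    rw [hadj]
    have hv : (u ᵥ* J) ⬝ᵥ ((J * adjugate B) *ᵥ u)
        = (u ᵥ* (J * (J * adjugate B))) ⬝ᵥ u := by
      rw [Matrix.dotProduct_mulVec, Matrix.vecMul_vecMul]
    rw [hv, ← mul_assoc, hJ2, one_mul, ← Matrix.dotProduct_mulVec]
    have hcard : Even (Fintype.card (Fin n ⊕ Fin n)) := by
      simp only [Fintype.card_sum, Fintype.card_fin]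
      exact ⟨n, rfl⟩
    have hadjsym : (adjugate B)ᵀ = adjugate B := by
      rw [Matrix.adjugate_transpose, hsym]
    rw [quad_form_zero h2 (adjugate B) hadjsym
      (adjugate_diag_zero h2 hcard B hsym hdiag) u, smul_zero]
  rw [Matrix.det_unique, Matrix.mul_assoc, ← Matrix.replicateCol_mulVec]
  simp only [Matrix.add_apply, Matrix.one_apply_eq, Matrix.replicateRow_mul_replicateCol_apply]
  rw [hdot, add_zero]

lemma isNilpotent_iff_charpoly_eq {K : Type*} [Field K] {m : Type*} [Fintype m] [DecidableEq m]
    (M : Matrix m m K) : IsNilpotent M ↔ M.charpoly = X ^ (Fintype.card m) := by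
  constructor
  · intro h
    have h1 := Matrix.isNilpotent_charpoly_sub_pow_of_isNilpotent h
    rw [← sub_eq_zero]
    exact h1.eq_zero
  · intro h
    have h1 := Matrix.aeval_self_charpoly M
    rw [h] at h1
    exact ⟨Fintype.card m, by simpa using h1⟩

set_option maxHeartbeats 1000000 in
set_option synthInstance.maxHeartbeats 400000 in
/-- Over a field of characteristic two, for `v ∈ k^{2n}` and `A` alternating,
the characteristic polynomials of `(v vᵀ + A)·J` and `A·J` coincide; in
particular one is nilpotent iff the other is. -/
theorem charpoly_vecMulVec_add_alt_mul_J {n : ℕ} (hn : 1 ≤ n)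
    {k : Type*} [Field k] [CharP k 2]
    (v : Fin n ⊕ Fin n → k)
    (A : Matrix (Fin n ⊕ Fin n) (Fin n ⊕ Fin n) k)
    (hAalt : Aᵀ = A) (hAdiag : ∀ i, A i i = 0) :
    ((Matrix.vecMulVec v v + A) * Jmat n k).charpoly = (A * Jmat n k).charpoly ∧
    (IsNilpotent ((Matrix.vecMulVec v v + A) * Jmat n k) ↔
      IsNilpotent (A * Jmat n k)) := by
  classical
  have hchar : ((Matrix.vecMulVec v v + A) * Jmat n k).charpoly
      = (A * Jmat n k).charpoly := by
    set K := RatFunc k with hK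
    haveI : CharP K 2 := charP_of_injective_algebraMap' k 2
    have h2K : (2 : K) = 0 := CharTwo.two_eq_zero
    set φ : Polynomial k →+* K := algebraMap (Polynomial k) K with hφ
    have hφinj : Function.Injective φ := RatFunc.algebraMap_injective k
    set ψ : k →+* K := φ.comp Polynomial.C with hψ
    have hmap : ∀ M : Matrix (Fin n ⊕ Fin n) (Fin n ⊕ Fin n) k,
        (Matrix.charmatrix M).map φ
          = φ Polynomial.X • (1 : Matrix (Fin n ⊕ Fin n) (Fin n ⊕ Fin n) K) + M.map ψ := by
      intro M
      ext i j
      by_cases hij : i = j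
      · subst hij
        rw [Matrix.map_apply, Matrix.charmatrix_apply_eq, map_sub, CharTwo.sub_eq_add]
        simp [hψ, smul_eq_mul]
      · rw [Matrix.map_apply, Matrix.charmatrix_apply_ne _ _ _ hij, map_neg, CharTwo.neg_eq]
        simp [hψ, Matrix.one_apply_ne hij, hij, smul_eq_mul]
    have hJmap : (Jmat n k).map ψ = Jmat n K := by
      have h2k : (2 : k) = 0 := CharTwo.two_eq_zero
      rw [Jmat_eq h2k, Jmat_eq h2K]
      ext i j
      rcases i with i | i <;> rcases j with j | j <;>
        simp [Matrix.map_apply, Matrix.fromBlocks_apply₁₁, Matrix.fromBlocks_apply₁₂,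
          Matrix.fromBlocks_apply₂₁, Matrix.fromBlocks_apply₂₂, Matrix.one_apply, apply_ite ψ]
    set uK : Fin n ⊕ Fin n → K := fun i => ψ (v i) with huK
    set AK := A.map ψ with hAK
    set B := φ Polynomial.X • Jmat n K + AK with hB
    have hAmul : ((A * Jmat n k)).map ψ = AK * Jmat n K := by
      rw [Matrix.map_mul, hJmap, hAK]
    have hBmul : B * Jmat n K = φ Polynomial.X • (1 : Matrix (Fin n ⊕ Fin n) (Fin n ⊕ Fin n) K) + AK * Jmat n K := by
      rw [hB, add_mul, Matrix.smul_mul, Jmat_mul_self h2K]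
    have h0 : (Matrix.charmatrix (A * Jmat n k)).map φ = B * Jmat n K := by
      rw [hmap, hAmul, hBmul]
    have hvec : (Matrix.vecMulVec v v).map ψ = Matrix.vecMulVec uK uK := by
      ext i j
      simp [Matrix.vecMulVec_apply, huK]
    have hsum : (Matrix.vecMulVec v v + A).map ψ = Matrix.vecMulVec uK uK + AK := by
      ext i j
      simp [Matrix.map_apply, Matrix.vecMulVec_apply, huK, hAK, map_add, _root_.map_mul]
    have h1 : (Matrix.charmatrix ((Matrix.vecMulVec v v + A) * Jmat n k)).map φ
        = (Matrix.vecMulVec uK uK + B) * Jmat n K := by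
      rw [hmap, Matrix.map_mul, hJmap, hsum, add_mul, add_mul, hBmul]
      abel
    have hsymB : Bᵀ = B := by
      rw [hB, Matrix.transpose_add, Matrix.transpose_smul, Jmat_transpose h2K, hAK,
        ← Matrix.transpose_map, hAalt]
    have hdiagB : ∀ i, B i i = 0 := by
      intro i
      simp [hB, Matrix.add_apply, Matrix.smul_apply, Jmat_diag h2K, hAK,
        Matrix.map_apply, hAdiag]
    have hcp : ∀ M : Matrix (Fin n ⊕ Fin n) (Fin n ⊕ Fin n) k,
        φ (Matrix.charpoly M) = ((Matrix.charmatrix M).map φ).det := fun M =>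
      RingHom.map_det φ (Matrix.charmatrix M)
    have hdetU : IsUnit (B * Jmat n K).det := by
      rw [← h0, ← hcp]
      exact isUnit_iff_ne_zero.mpr
        ((map_ne_zero_iff φ hφinj).mpr (Matrix.charpoly_monic _).ne_zero)
    have hkey := key_det B hsymB hdiagB hdetU uK
    apply hφinj
    calc φ ((Matrix.vecMulVec v v + A) * Jmat n k).charpoly
        = ((Matrix.charmatrix ((Matrix.vecMulVec v v + A) * Jmat n k)).map φ).det := hcp _
      _ = ((Matrix.vecMulVec uK uK + B) * Jmat n K).det := by rw [h1]
      _ = (B * Jmat n K).det := hkey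
      _ = ((Matrix.charmatrix (A * Jmat n k)).map φ).det := by rw [h0]
      _ = φ ((A * Jmat n k).charpoly) := (hcp _).symm
  exact ⟨hchar, by rw [isNilpotent_iff_charpoly_eq, isNilpotent_iff_charpoly_eq, hchar]⟩
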